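/- arXiv:2001.06655 — 2 statements merged into one kernel-verified Lean document; each statement's English description precedes it below -/
import Mathlib

section
/- For α > 0 and f_α(t) = a^(−αt), one has S*_{n,a}(f_α; x) = a^(x·(a^(−α/n) − 1)/(a^(1/n) − 1)), and consequently S*_{n,a}(f_α) converges to f_α uniformly on [0, ∞) as n → ∞. -/
open Real Filter

noncomputable def szasz (a : ℝ) (n : ℕ) (f : ℝ → ℝ) (x : ℝ) : ℝ :=
  ∑' k : ℕ, a ^ (-x / (a ^ ((1:ℝ)/n) - 1)) *
    (x * Real.log a) ^ k / ((a ^ ((1:ℝ)/n) - 1) ^ k * (Nat.factorial k : ℝ)) * f (k / n)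

lemma exp_tsum (y : ℝ) : Real.exp y = ∑' k : ℕ, y ^ k / (Nat.factorial k : ℝ) := by
  rw [Real.exp_eq_exp_ℝ, NormedSpace.exp_eq_tsum_div]

lemma rpow_one_div_gt (a : ℝ) (ha : 1 < a) (n : ℕ) (hn : 1 ≤ n) : 1 < a ^ ((1:ℝ)/n) := by
  apply Real.one_lt_rpow_iff_of_pos (by linarith) |>.mpr
  exact Or.inl ⟨ha, by positivity⟩

lemma szasz_exp (a : ℝ) (ha : 1 < a) (α : ℝ) (n : ℕ) (hn : 1 ≤ n) (x : ℝ) :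
    szasz a n (fun t => a ^ (-α * t)) x =
      a ^ (x * (a ^ (-α / n) - 1) / (a ^ ((1:ℝ)/n) - 1)) := by
  have ha0 : (0:ℝ) < a := lt_trans zero_lt_one ha
  have hc : 0 < a ^ ((1:ℝ)/n) - 1 := by
    have := rpow_one_div_gt a ha n hn; linarith
  set c := a ^ ((1:ℝ)/n) - 1 with hcdef
  set b := a ^ (-α/(n:ℝ)) with hbdef
  set y := x * Real.log a * b / c with hy
  have hterm : ∀ k : ℕ,
      a ^ (-x / c) * (x * Real.log a) ^ k / (c ^ k * (Nat.factorial k : ℝ)) *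
        a ^ (-α * ((k:ℝ) / n)) = a ^ (-x/c) * (y ^ k / (Nat.factorial k : ℝ)) := by
    intro k
    have hfk : a ^ (-α * ((k:ℝ)/n)) = b ^ k := by
      rw [hbdef, ← Real.rpow_natCast (a ^ (-α/(n:ℝ))) k, ← Real.rpow_mul ha0.le]
      congr 1; ring
    rw [hfk, hy, div_pow, mul_pow, mul_pow]
    have hck : (c:ℝ) ^ k ≠ 0 := pow_ne_zero _ (ne_of_gt hc)
    have hfk0 : (Nat.factorial k : ℝ) ≠ 0 := Nat.cast_ne_zero.mpr (Nat.factorial_ne_zero k)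
    field_simp
    ring
  calc szasz a n (fun t => a ^ (-α * t)) x
      = ∑' k : ℕ, a ^ (-x/c) * (y ^ k / (Nat.factorial k : ℝ)) := by
        unfold szasz; exact tsum_congr hterm
    _ = a ^ (-x/c) * ∑' k : ℕ, y ^ k / (Nat.factorial k : ℝ) := tsum_mul_left
    _ = a ^ (-x/c) * Real.exp y := by rw [← exp_tsum]
    _ = Real.exp (Real.log a * (-x/c) + y) := by
        rw [Real.exp_add, Real.rpow_def_of_pos ha0]
    _ = a ^ (x * (b - 1) / c) := by
        rw [Real.rpow_def_of_pos ha0]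
        congr 1
        have hc0 : c ≠ 0 := ne_of_gt hc
        rw [hy]
        clear_value c b
        field_simp
        ring

lemma slope_exp (c : ℝ) :
    Filter.Tendsto (fun t : ℝ => (Real.exp (c*t) - 1)/t) (nhdsWithin 0 {0}ᶜ) (nhds c) := by
  have h : HasDerivAt (fun t : ℝ => Real.exp (c*t)) c 0 := by
    have := ((hasDerivAt_id (0:ℝ)).const_mul c).exp
    simpa using this
  have := hasDerivAt_iff_tendsto_slope.mp h
  simpa [slope_fun_def, Real.exp_zero, div_eq_inv_mul] using this

lemma s_lim (a : ℝ) (ha : 1 < a) (α : ℝ) (hα : 0 < α) :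
    Tendsto (fun n : ℕ => Real.log a * ((1 - a ^ (-α/(n:ℝ))) / (a ^ ((1:ℝ)/(n:ℕ)) - 1)))
      atTop (nhds (α * Real.log a)) := by
  have ha0 : (0:ℝ) < a := lt_trans zero_lt_one ha
  set L := Real.log a with hL
  have hLpos : 0 < L := Real.log_pos ha
  have ht : Tendsto (fun n : ℕ => (1:ℝ)/n) atTop (nhdsWithin 0 {0}ᶜ) := by
    apply tendsto_nhdsWithin_of_tendsto_nhds_of_eventually_within
    · exact tendsto_one_div_atTop_nhds_zero_nat
    · filter_upwards [eventually_ge_atTop 1] with n hn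
      simp only [Set.mem_compl_iff, Set.mem_singleton_iff]
      exact one_div_ne_zero (Nat.cast_ne_zero.mpr (by omega))
  have hnum : Tendsto (fun n : ℕ => (Real.exp (-(α*L)*((1:ℝ)/n)) - 1)/((1:ℝ)/n)) atTop
      (nhds (-(α*L))) := (slope_exp (-(α*L))).comp ht
  have hden : Tendsto (fun n : ℕ => (Real.exp (L*((1:ℝ)/n)) - 1)/((1:ℝ)/n)) atTop
      (nhds L) := (slope_exp L).comp ht
  have hmain : Tendsto (fun n : ℕ =>
      L * (-((Real.exp (-(α*L)*((1:ℝ)/n)) - 1)/((1:ℝ)/n)) /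
        ((Real.exp (L*((1:ℝ)/n)) - 1)/((1:ℝ)/n)))) atTop
      (nhds (L * (-(-(α*L)) / L))) :=
    tendsto_const_nhds.mul ((hnum.neg).div hden (ne_of_gt hLpos))
  have hval : L * (-(-(α*L)) / L) = α * L := by field_simp
  rw [hval] at hmain
  apply hmain.congr'
  filter_upwards [eventually_ge_atTop 1] with n hn
  have htn : ((1:ℝ)/n) ≠ 0 := one_div_ne_zero (Nat.cast_ne_zero.mpr (by omega))
  have h1 : a ^ ((1:ℝ)/(n:ℕ)) = Real.exp (L*((1:ℝ)/n)) := by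
    rw [Real.rpow_def_of_pos ha0]
  have h2 : a ^ (-α/(n:ℝ)) = Real.exp (-(α*L)*((1:ℝ)/n)) := by
    rw [Real.rpow_def_of_pos ha0]; congr 1; ring
  have hd : Real.exp (L*((1:ℝ)/n)) - 1 ≠ 0 := by
    have hpos : (0:ℝ) < L*((1:ℝ)/n) := by
      have : (0:ℝ) < (n:ℝ) := by exact_mod_cast Nat.pos_of_ne_zero (by omega)
      positivity
    nlinarith [Real.add_one_le_exp (L*((1:ℝ)/n))]
  rw [h1, h2, ← neg_div, div_div_div_cancel_right₀ htn, neg_sub]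

lemma exp_diff_bound (c s t x : ℝ) (hc : 0 < c) (hcs : c ≤ s) (hst : s ≤ t) (hx : 0 ≤ x) :
    Real.exp (-s*x) - Real.exp (-t*x) ≤ (t - s) / c := by
  have key : Real.exp (-s*x) - Real.exp (-t*x)
      = Real.exp (-s*x) * (1 - Real.exp (-(t-s)*x)) := by
    rw [mul_sub, mul_one, ← Real.exp_add]; ring_nf
  rw [key]
  have h1 : Real.exp (-s*x) ≤ Real.exp (-c*x) := by
    apply Real.exp_le_exp.mpr; nlinarith
  have h2 : 1 - Real.exp (-(t-s)*x) ≤ (t-s)*x := by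
    have := Real.add_one_le_exp (-(t-s)*x); linarith
  have h3 : 0 ≤ 1 - Real.exp (-(t-s)*x) := by
    have : Real.exp (-(t-s)*x) ≤ 1 := Real.exp_le_one_iff.mpr (by nlinarith)
    linarith
  have hts : (0:ℝ) ≤ t - s := by linarith
  have step1 : Real.exp (-s*x) * (1 - Real.exp (-(t-s)*x)) ≤ Real.exp (-c*x) * ((t-s)*x) :=
    mul_le_mul h1 h2 h3 (Real.exp_pos _).le
  have key2 : Real.exp (-c*x) * x ≤ 1/c := by
    rcases eq_or_lt_of_le hx with h | h
    · rw [← h]; simp; positivity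
    · have hcx : 0 < c*x := by positivity
      have hex : c * x ≤ Real.exp (c*x) := by
        have := Real.add_one_le_exp (c*x); linarith
      have hinv : (Real.exp (c*x))⁻¹ ≤ (c*x)⁻¹ := by
        apply inv_anti₀ hcx hex
      calc Real.exp (-c*x) * x = (Real.exp (c*x))⁻¹ * x := by rw [neg_mul, Real.exp_neg]
        _ ≤ (c*x)⁻¹ * x := mul_le_mul_of_nonneg_right hinv hx
        _ = 1/c := by field_simp
  have step2 := mul_le_mul_of_nonneg_left key2 hts
  calc Real.exp (-s*x) * (1 - Real.exp (-(t-s)*x))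
      ≤ Real.exp (-c*x) * ((t-s)*x) := step1
    _ = (t-s) * (Real.exp (-c*x) * x) := by ring
    _ ≤ (t-s) * (1/c) := step2
    _ = (t-s)/c := by ring

lemma unif_exp (s : ℕ → ℝ) (γ : ℝ) (hγ : 0 < γ) (hs : Tendsto s atTop (nhds γ)) :
    TendstoUniformlyOn (fun n x => Real.exp (-(s n)*x)) (fun x => Real.exp (-γ*x))
      atTop (Set.Ici 0) := by
  rw [Metric.tendstoUniformlyOn_iff]
  intro ε hε
  have hδ : 0 < min (γ/2) (ε*γ/4) := by positivity
  filter_upwards [Metric.tendsto_nhds.mp hs _ hδ] with n hn x hx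
  rw [Real.dist_eq] at hn ⊢
  have h1 : |s n - γ| < γ/2 := lt_of_lt_of_le hn (min_le_left _ _)
  have h2 : |s n - γ| < ε*γ/4 := lt_of_lt_of_le hn (min_le_right _ _)
  have habs := abs_lt.mp h1
  have hx0 : (0:ℝ) ≤ x := hx
  have key : |Real.exp (-γ*x) - Real.exp (-(s n)*x)| ≤ |s n - γ| / (γ/2) := by
    rcases le_total (s n) γ with h | h
    · have hm : Real.exp (-γ*x) ≤ Real.exp (-(s n)*x) := Real.exp_le_exp.mpr (by nlinarith)
      have hb := exp_diff_bound (γ/2) (s n) γ x (by linarith) (by linarith) h hx0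
      rw [abs_of_nonpos (by linarith), abs_of_nonpos (by linarith)]
      have hng : -(s n - γ) = γ - s n := by ring
      rw [hng]; linarith
    · have hm : Real.exp (-(s n)*x) ≤ Real.exp (-γ*x) := Real.exp_le_exp.mpr (by nlinarith)
      have hb := exp_diff_bound (γ/2) γ (s n) x (by linarith) (by linarith) h hx0
      rw [abs_of_nonneg (by linarith), abs_of_nonneg (by linarith)]
      linarith
  have hlt : |s n - γ| / (γ/2) < ε := by
    rw [div_lt_iff₀ (by linarith)]
    nlinarith
  linarith

theorem stmt_8 (a : ℝ) (ha : 1 < a) (α : ℝ) (hα : 0 < α) :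
    (∀ n : ℕ, 1 ≤ n → ∀ x : ℝ, 0 ≤ x →
      szasz a n (fun t => a ^ (-α * t)) x =
        a ^ (x * (a ^ (-α / n) - 1) / (a ^ ((1:ℝ)/n) - 1))) ∧
    TendstoUniformlyOn (fun (n : ℕ) (x : ℝ) => szasz a n (fun t => a ^ (-α * t)) x)
      (fun x => a ^ (-α * x)) Filter.atTop (Set.Ici 0) := by
  have ha0 : (0:ℝ) < a := lt_trans zero_lt_one ha
  have hL : 0 < Real.log a := Real.log_pos ha
  constructor
  · intro n hn x _
    exact szasz_exp a ha α n hn x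
  · have hs := s_lim a ha α hα
    have hu := unif_exp (fun n : ℕ => Real.log a * ((1 - a ^ (-α/(n:ℝ))) / (a ^ ((1:ℝ)/(n:ℕ)) - 1)))
      (α * Real.log a) (by positivity) hs
    have hfun : (fun x : ℝ => Real.exp (-(α * Real.log a)*x)) = fun x => a ^ (-α*x) := by
      funext x
      rw [Real.rpow_def_of_pos ha0]
      congr 1; ring
    have hu2 := hu.congr (F' := fun (n : ℕ) (x : ℝ) => szasz a n (fun t => a ^ (-α * t)) x) ?_
    · rw [hfun] at hu2; exact hu2
    · filter_upwards [eventually_ge_atTop 1] with n hn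
      intro x hx
      simp only []
      rw [szasz_exp a ha α n hn x,
        Real.rpow_def_of_pos ha0 (x * (a ^ (-α / (n:ℕ)) - 1) / (a ^ ((1:ℝ)/(n:ℕ)) - 1))]
      congr 1
      ring
end

section
/- For the Kantorovich-type operators, one has the identities: S̃*_{n,a}(e_0; x) = 1, S̃*_{n,a}(e_1; x) = 1/(2n) + x·log(a)/((a^(1/n)−1)·n), and S̃*_{n,a}(e_2; x) = 1/(3n²) + 2x·log(a)/((a^(1/n)−1)·n²) + x²(log a)²/((a^(1/n)−1)²·n²), for all x ≥ 0. -/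
open Real

noncomputable def kant (a : ℝ) (n : ℕ) (f : ℝ → ℝ) (x : ℝ) : ℝ :=
  (n : ℝ) * ∑' k : ℕ, a ^ (-x / (a ^ ((1:ℝ)/n) - 1)) *
    (x * Real.log a) ^ k / ((a ^ ((1:ℝ)/n) - 1) ^ k * (Nat.factorial k : ℝ)) *
    ∫ t in ((k : ℝ)/n)..(((k : ℝ) + 1)/n), f t

lemma sum0 (y : ℝ) : ∑' k : ℕ, y ^ k / (Nat.factorial k : ℝ) = Real.exp y := by
  rw [Real.exp_eq_exp_ℝ, NormedSpace.exp_eq_tsum_div]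

lemma S0 (y : ℝ) : Summable (fun k : ℕ => y ^ k / (Nat.factorial k : ℝ)) :=
  Real.summable_pow_div_factorial y

lemma step1 (y : ℝ) (k : ℕ) :
    ((k:ℝ) + 1) * y ^ (k + 1) / (Nat.factorial (k + 1) : ℝ)
      = y * (y ^ k / (Nat.factorial k : ℝ)) := by
  have hfac : ((Nat.factorial (k+1)) : ℝ) = ((k:ℝ) + 1) * (Nat.factorial k : ℝ) := by
    push_cast [Nat.factorial_succ]; ring
  have hk : ((k:ℝ) + 1) ≠ 0 := by positivity
  have hkf : (Nat.factorial k : ℝ) ≠ 0 := Nat.cast_ne_zero.mpr (Nat.factorial_ne_zero k)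
  rw [hfac, pow_succ]
  field_simp

lemma S1 (y : ℝ) : Summable (fun k : ℕ => (k:ℝ) * y ^ k / (Nat.factorial k : ℝ)) := by
  rw [← summable_nat_add_iff 1]
  exact ((S0 y).mul_left y).congr (fun k => by push_cast; rw [← step1 y k])

lemma sum1 (y : ℝ) :
    ∑' k : ℕ, (k:ℝ) * y ^ k / (Nat.factorial k : ℝ) = y * Real.exp y := by
  rw [Summable.tsum_eq_zero_add (S1 y)]
  simp only [Nat.cast_zero, zero_mul, zero_div, zero_add]
  rw [tsum_congr (fun k : ℕ => by push_cast; rw [step1 y k]), tsum_mul_left, sum0]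

lemma step2 (y : ℝ) (k : ℕ) :
    ((k:ℝ) + 1) ^ 2 * y ^ (k + 1) / (Nat.factorial (k + 1) : ℝ)
      = y * ((k:ℝ) * y ^ k / (Nat.factorial k : ℝ)) + y * (y ^ k / (Nat.factorial k : ℝ)) := by
  have h := step1 y k
  have : ((k:ℝ) + 1) ^ 2 * y ^ (k + 1) / (Nat.factorial (k + 1) : ℝ)
      = ((k:ℝ) + 1) * (((k:ℝ) + 1) * y ^ (k + 1) / (Nat.factorial (k + 1) : ℝ)) := by ring
  rw [this, h]; ring

lemma S2 (y : ℝ) : Summable (fun k : ℕ => (k:ℝ) ^ 2 * y ^ k / (Nat.factorial k : ℝ)) := by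
  rw [← summable_nat_add_iff 1]
  exact (((S1 y).mul_left y).add ((S0 y).mul_left y)).congr
    (fun k => by push_cast; rw [← step2 y k])

lemma sum2 (y : ℝ) :
    ∑' k : ℕ, (k:ℝ) ^ 2 * y ^ k / (Nat.factorial k : ℝ) = (y ^ 2 + y) * Real.exp y := by
  rw [Summable.tsum_eq_zero_add (S2 y)]
  simp only [Nat.cast_zero, ne_eq, OfNat.ofNat_ne_zero, not_false_eq_true, zero_pow,
    zero_mul, zero_div, zero_add]
  rw [tsum_congr (fun k : ℕ => by push_cast; rw [step2 y k]),
    Summable.tsum_add ((S1 y).mul_left y) ((S0 y).mul_left y), tsum_mul_left, tsum_mul_left,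
    sum0, sum1]
  ring

theorem stmt_17 (a : ℝ) (ha : 1 < a) (n : ℕ) (hn : 1 ≤ n) (x : ℝ) (hx : 0 ≤ x) :
    kant a n (fun _ => (1:ℝ)) x = 1 ∧
    kant a n (fun t => t) x =
      1 / (2 * n) + x * Real.log a / ((a ^ ((1:ℝ)/n) - 1) * n) ∧
    kant a n (fun t => t ^ 2) x =
      1 / (3 * n ^ 2) + 2 * x * Real.log a / ((a ^ ((1:ℝ)/n) - 1) * n ^ 2)
        + x ^ 2 * Real.log a ^ 2 / ((a ^ ((1:ℝ)/n) - 1) ^ 2 * n ^ 2) := by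
  have ha0 : (0:ℝ) < a := lt_trans one_pos ha
  have hn0 : (n:ℝ) ≠ 0 := Nat.cast_ne_zero.mpr (by omega)
  have hnpos : (0:ℝ) < n := Nat.cast_pos.mpr (by omega)
  set b : ℝ := a ^ ((1:ℝ)/n) - 1 with hbdef
  have hb : 0 < b := by
    have : 1 < a ^ ((1:ℝ)/n) :=
      (Real.one_lt_rpow_iff_of_pos ha0).mpr (Or.inl ⟨ha, by positivity⟩)
    simpa [hbdef] using sub_pos.mpr this
  have hbne : b ≠ 0 := ne_of_gt hb
  set y : ℝ := x * Real.log a / b with hydef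
  have hxy : x * Real.log a = y * b := by rw [hydef, div_mul_cancel₀ _ hbne]
  have haexp : a ^ (-x / b) = Real.exp (-y) := by
    rw [Real.rpow_def_of_pos ha0]
    congr 1
    rw [hydef]
    ring
  have hbk : ∀ k : ℕ, (b:ℝ) ^ k ≠ 0 := fun k => pow_ne_zero k hbne
  have hkf : ∀ k : ℕ, (Nat.factorial k : ℝ) ≠ 0 :=
    fun k => Nat.cast_ne_zero.mpr (Nat.factorial_ne_zero k)
  have hexp : Real.exp (-y) = (Real.exp y)⁻¹ := Real.exp_neg y
  refine ⟨?_, ?_, ?_⟩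
  · -- e₀
    have key : ∀ k : ℕ,
        a ^ (-x / b) * (x * Real.log a) ^ k / (b ^ k * (Nat.factorial k : ℝ)) *
          ∫ t in ((k : ℝ)/n)..(((k : ℝ) + 1)/n), (1:ℝ)
        = (Real.exp (-y) / n) * (y ^ k / (Nat.factorial k : ℝ)) := by
      intro k
      rw [intervalIntegral.integral_const, smul_eq_mul, mul_one, haexp, hxy, mul_pow]
      field_simp
      ring
    simp only [kant]
    rw [tsum_congr key, tsum_mul_left, sum0, hexp]
    field_simp
  · -- e₁
    have key : ∀ k : ℕ,
        a ^ (-x / b) * (x * Real.log a) ^ k / (b ^ k * (Nat.factorial k : ℝ)) *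
          ∫ t in ((k : ℝ)/n)..(((k : ℝ) + 1)/n), t
        = (Real.exp (-y) / n ^ 2) * ((k:ℝ) * y ^ k / (Nat.factorial k : ℝ))
          + (Real.exp (-y) / (2 * n ^ 2)) * (y ^ k / (Nat.factorial k : ℝ)) := by
      intro k
      rw [integral_id, haexp, hxy, mul_pow]
      field_simp
      ring
    simp only [kant]
    rw [tsum_congr key, Summable.tsum_add ((S1 y).mul_left _) ((S0 y).mul_left _),
      tsum_mul_left, tsum_mul_left, sum0, sum1, hxy, hexp]
    field_simp
    ring
  · -- e₂
    have key : ∀ k : ℕ,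
        a ^ (-x / b) * (x * Real.log a) ^ k / (b ^ k * (Nat.factorial k : ℝ)) *
          ∫ t in ((k : ℝ)/n)..(((k : ℝ) + 1)/n), t ^ 2
        = (Real.exp (-y) / n ^ 3) * ((k:ℝ) ^ 2 * y ^ k / (Nat.factorial k : ℝ))
          + ((Real.exp (-y) / n ^ 3) * ((k:ℝ) * y ^ k / (Nat.factorial k : ℝ))
          + (Real.exp (-y) / (3 * n ^ 3)) * (y ^ k / (Nat.factorial k : ℝ))) := by
      intro k
      rw [integral_pow, haexp, hxy, mul_pow]
      push_cast
      field_simp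
      ring
    have hx2 : x ^ 2 * Real.log a ^ 2 = (y * b) ^ 2 := by
      rw [show x ^ 2 * Real.log a ^ 2 = (x * Real.log a) ^ 2 by ring, hxy]
    simp only [kant]
    rw [tsum_congr key,
      Summable.tsum_add ((S2 y).mul_left _) (((S1 y).mul_left _).add ((S0 y).mul_left _)),
      Summable.tsum_add ((S1 y).mul_left _) ((S0 y).mul_left _),
      tsum_mul_left, tsum_mul_left, tsum_mul_left, sum0, sum1, sum2,
      show 2 * x * Real.log a = 2 * (x * Real.log a) by ring, hxy, hx2, hexp]
    field_simp
    ring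
end
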